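/- Let n ≥ 2 and let w_0, w_1, …, w_l be a symmetric filter of length l (0 < l ≤ ⌊(n−1)/2⌋), with w_k = 0 for k > l. Let W^R = T + H^R ∈ ℝ^{n×n} with [T]_{i,j} = w_{|i−j|} and [H^R]_{i,j} = w_{i+j−1} + w_{2n+1−i−j}. Then W^R is symmetric, its ∞-operator norm (maximum absolute row sum) equals 1, and every eigenvalue of W^R is real and lies in [−1, 1]. -/

import Mathlib

open Finset in
private lemma stmt6_rowsum (n l : ℕ) (hn : 2 ≤ n) (w : ℕ → ℝ)
    (hl : 0 < l) (hln : l ≤ (n - 1) / 2)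
    (hzero : ∀ k, l < k → w k = 0)
    (hsum : w 0 + 2 * ∑ j ∈ Finset.Icc 1 l, w j = 1)
    (i : ℕ) (hi : i < n) :
    (∑ j ∈ range n, (w ((i : ℤ) - (j : ℤ)).natAbs
        + (w (i + j + 1) + w (2 * n - 1 - i - j)))) = 1 := by
  have hln' : 2 * l + 1 ≤ n := by omega
  simp only [Finset.sum_add_distrib]
  have hS1 : ∑ j ∈ range n, w ((i : ℤ) - (j : ℤ)).natAbs
      = ∑ k ∈ range (i+1), w k + ∑ k ∈ Ico 1 (n - i), w k := by
    rw [range_eq_Ico, ← Finset.sum_Ico_consecutive _ (Nat.zero_le (i+1)) (by omega : i+1 ≤ n)]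
    congr 1
    · rw [← range_eq_Ico, ← Finset.sum_range_reflect (fun k => w k) (i+1)]
      refine Finset.sum_congr rfl fun j hj => ?_
      rw [Finset.mem_range] at hj
      congr 1
      omega
    · rw [Finset.sum_Ico_eq_sum_range, Finset.sum_Ico_eq_sum_range]
      refine Finset.sum_congr (by congr 1 <;> omega) fun j hj => ?_
      rw [Finset.mem_range] at hj
      congr 1
      omega
  have hS2 : ∑ j ∈ range n, w (i + j + 1) = ∑ m ∈ Ico (i+1) (i+1+n), w m := by
    rw [Finset.sum_Ico_eq_sum_range]
    refine Finset.sum_congr (by congr 1; omega) fun j hj => by congr 1; omega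
  have hS3 : ∑ j ∈ range n, w (2 * n - 1 - i - j) = ∑ m ∈ Ico (n-i) (n-i+n), w m := by
    rw [Finset.sum_Ico_eq_sum_range, ← Finset.sum_range_reflect]
    refine Finset.sum_congr (by congr 1; omega) fun j hj => ?_
    rw [Finset.mem_range] at hj
    congr 1
    omega
  rw [hS1, hS2, hS3]
  have h12 : ∑ k ∈ range (i+1), w k + ∑ m ∈ Ico (i+1) (i+1+n), w m
      = ∑ k ∈ range (l+1), w k := by
    rw [range_eq_Ico, Finset.sum_Ico_consecutive _ (Nat.zero_le _) (by omega), ← range_eq_Ico]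
    rw [Finset.sum_subset (Finset.range_subset_range.2 (by omega : l+1 ≤ i+1+n))]
    intro x _ hx
    rw [Finset.mem_range] at hx
    exact hzero x (by omega)
  have h34 : ∑ k ∈ Ico 1 (n-i), w k + ∑ m ∈ Ico (n-i) (n-i+n), w m
      = ∑ k ∈ Icc 1 l, w k := by
    rw [Finset.sum_Ico_consecutive _ (by omega) (by omega), ← Finset.Ico_add_one_right_eq_Icc]
    rw [Finset.sum_subset (Finset.Ico_subset_Ico le_rfl (by omega : l+1 ≤ n-i+n))]
    intro x hx hx2
    rw [Finset.mem_Ico] at hx hx2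
    exact hzero x (by omega)
  have h0 : ∑ k ∈ range (l+1), w k = w 0 + ∑ k ∈ Icc 1 l, w k := by
    rw [Finset.sum_range_succ', ← Finset.Ico_add_one_right_eq_Icc, Finset.sum_Ico_eq_sum_range, add_comm]
    congr 1
    refine Finset.sum_congr (by congr 1 <;> omega) fun j _ => by congr 1 <;> omega
  calc ∑ k ∈ range (i+1), w k + ∑ k ∈ Ico 1 (n-i), w k
      + (∑ m ∈ Ico (i+1) (i+1+n), w m + ∑ m ∈ Ico (n-i) (n-i+n), w m)
      = ∑ k ∈ range (l+1), w k + ∑ k ∈ Icc 1 l, w k := by rw [← h12, ← h34]; ring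
    _ = w 0 + 2 * ∑ k ∈ Icc 1 l, w k := by rw [h0]; ring
    _ = 1 := hsum

/-- The Reflective matrix `W^R = T + H^R` built from a symmetric
filter is symmetric, its ∞-operator norm (maximum absolute row sum) equals 1,
and every eigenvalue of it is real and lies in `[-1, 1]`. -/
theorem stmt_6 (n l : ℕ) (hn : 2 ≤ n) (w : ℕ → ℝ)
    (hl : 0 < l) (hln : l ≤ (n - 1) / 2)
    (hpos : ∀ j, j ≤ l → 0 < w j)
    (hzero : ∀ k, l < k → w k = 0)
    (hsum : w 0 + 2 * ∑ j ∈ Finset.Icc 1 l, w j = 1)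
    (W : Matrix (Fin n) (Fin n) ℝ)
    (hW : ∀ i j : Fin n, W i j =
      w ((i.val : ℤ) - (j.val : ℤ)).natAbs
        + (w (i.val + j.val + 1) + w (2 * n - 1 - i.val - j.val))) :
    W.IsSymm ∧
    (⨆ i : Fin n, ∑ j : Fin n, |W i j|) = 1 ∧
    ∀ μ : ℂ, μ ∈ spectrum ℂ (W.map (fun x : ℝ => (x : ℂ))) →
      μ.im = 0 ∧ -1 ≤ μ.re ∧ μ.re ≤ 1 := by
  haveI : NeZero n := ⟨by omega⟩
  have hwnn : ∀ k, 0 ≤ w k := by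
    intro k
    rcases le_or_gt k l with h | h
    · exact (hpos k h).le
    · rw [hzero k h]
  have hWnn : ∀ i j, 0 ≤ W i j := by
    intro i j
    rw [hW]
    have := hwnn ((i.val : ℤ) - (j.val : ℤ)).natAbs
    have := hwnn (i.val + j.val + 1)
    have := hwnn (2 * n - 1 - i.val - j.val)
    linarith
  -- symmetry
  have hsym : W.IsSymm := by
    refine Matrix.IsSymm.ext fun i j => ?_
    have h1 : ((j.val : ℤ) - (i.val : ℤ)).natAbs = ((i.val : ℤ) - (j.val : ℤ)).natAbs := by
      omega
    have h2 : j.val + i.val + 1 = i.val + j.val + 1 := by omega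
    have h3 : 2 * n - 1 - j.val - i.val = 2 * n - 1 - i.val - j.val := by omega
    rw [hW, hW, h1, h2, h3]
  -- row sums
  have hrow : ∀ i : Fin n, ∑ j : Fin n, W i j = 1 := by
    intro i
    have hcast : ∑ j : Fin n, W i j
        = ∑ j ∈ Finset.range n, (w (((i.val : ℤ) - (j : ℤ)).natAbs)
            + (w (i.val + j + 1) + w (2 * n - 1 - i.val - j))) := by
      rw [← Fin.sum_univ_eq_sum_range (fun j => w (((i.val : ℤ) - (j : ℤ)).natAbs)
            + (w (i.val + j + 1) + w (2 * n - 1 - i.val - j))) n]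
      exact Finset.sum_congr rfl fun j _ => hW i j
    rw [hcast]
    exact stmt6_rowsum n l hn w hl hln hzero hsum i.val i.isLt
  have habs : ∀ i : Fin n, ∑ j : Fin n, |W i j| = 1 := by
    intro i
    rw [← hrow i]
    exact Finset.sum_congr rfl fun j _ => abs_of_nonneg (hWnn i j)
  refine ⟨hsym, ?_, ?_⟩
  · simp only [habs]
    exact ciSup_const
  · intro μ hμ
    set M := W.map (fun x : ℝ => (x : ℂ)) with hM
    have hMsym : ∀ x y : Fin n, M x y = M y x := by
      intro x y
      simp only [hM, Matrix.map_apply]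
      exact_mod_cast congrArg (fun t : ℝ => (t : ℂ)) (hsym.apply y x)
    have hMconj : ∀ x y : Fin n, (starRingEnd ℂ) (M x y) = M x y := by
      intro x y
      simp [hM, Matrix.map_apply, Complex.conj_ofReal]
    -- extract an eigenvector
    rw [← AlgEquiv.spectrum_eq (Matrix.toLinAlgEquiv' (R := ℂ) (n := Fin n)) M,
      ← Module.End.hasEigenvalue_iff_mem_spectrum] at hμ
    obtain ⟨v, hv⟩ := hμ.exists_hasEigenvector
    have heq : M.mulVec v = μ • v := by
      have h := hv.apply_eq_smul
      rwa [Matrix.toLinAlgEquiv'_apply] at h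
    have heq' : ∀ x : Fin n, μ * v x = ∑ y : Fin n, M x y * v y := by
      intro x
      have := congrFun heq x
      simp only [Pi.smul_apply, smul_eq_mul] at this
      rw [← this]
      simp [Matrix.mulVec, dotProduct]
    obtain ⟨i, -, hmax⟩ := Finset.exists_max_image Finset.univ
      (fun j => ‖v j‖) ⟨0, Finset.mem_univ 0⟩
    have hvi : 0 < ‖v i‖ := by
      rcases (norm_nonneg (v i)).lt_or_eq with h | h
      · exact h
      · exfalso
        apply hv.2
        funext j
        have hj := hmax j (Finset.mem_univ j)
        rw [← h] at hj
        exact norm_eq_zero.mp (le_antisymm hj (norm_nonneg _))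
    -- the imaginary part vanishes
    have him : μ.im = 0 := by
      set r : ℝ := ∑ j : Fin n, Complex.normSq (v j) with hr
      have hrpos : 0 < r := by
        refine Finset.sum_pos' (fun j _ => Complex.normSq_nonneg _) ⟨i, Finset.mem_univ i, ?_⟩
        have : v i ≠ 0 := by
          intro h0
          rw [h0] at hvi
          simp at hvi
        exact Complex.normSq_pos.mpr this
      have hc : ∑ j : Fin n, (starRingEnd ℂ) (v j) * v j = (r : ℂ) := by
        rw [hr]
        push_cast
        exact Finset.sum_congr rfl fun j _ => by
          rw [mul_comm, Complex.mul_conj]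
      have hs : μ * (r : ℂ) = ∑ x : Fin n, ∑ y : Fin n,
          (starRingEnd ℂ) (v x) * (M x y * v y) := by
        rw [← hc, Finset.mul_sum]
        refine Finset.sum_congr rfl fun x _ => ?_
        rw [show μ * ((starRingEnd ℂ) (v x) * v x) = (starRingEnd ℂ) (v x) * (μ * v x) by ring,
          heq' x, Finset.mul_sum]
      have hconj : (starRingEnd ℂ) (μ * (r : ℂ)) = μ * (r : ℂ) := by
        rw [hs, map_sum]
        rw [Finset.sum_comm]
        refine Finset.sum_congr rfl fun x _ => ?_
        rw [map_sum]
        refine Finset.sum_congr rfl fun y _ => ?_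
        simp only [map_mul, RingHomCompTriple.comp_apply, Complex.conj_conj, hMconj, RingHom.id_apply]
        rw [hMsym y x]
        ring
      have him' : (μ * (r : ℂ)).im = 0 := by
        have h := congrArg Complex.im hconj
        simp only [Complex.conj_im] at h
        linarith
      have : μ.im * r = 0 := by
        simpa [Complex.mul_im] using him'
      exact (mul_eq_zero.mp this).resolve_right (ne_of_gt hrpos)
    refine ⟨him, ?_⟩
    -- the bound
    have hrowM : ∑ j : Fin n, ‖M i j‖ = 1 := by
      rw [← habs i]
      exact Finset.sum_congr rfl fun j _ => by
        simp [hM, Matrix.map_apply, Complex.norm_real]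
    have key : ‖μ‖ * ‖v i‖ ≤ 1 * ‖v i‖ := by
      calc ‖μ‖ * ‖v i‖ = ‖μ * v i‖ := (norm_mul _ _).symm
        _ = ‖∑ j : Fin n, M i j * v j‖ := by rw [heq' i]
        _ ≤ ∑ j : Fin n, ‖M i j * v j‖ := norm_sum_le _ _
        _ = ∑ j : Fin n, ‖M i j‖ * ‖v j‖ := by
            simp [map_mul]
        _ ≤ ∑ j : Fin n, ‖M i j‖ * ‖v i‖ :=
            Finset.sum_le_sum fun j _ => mul_le_mul_of_nonneg_left
              (hmax j (Finset.mem_univ j)) (norm_nonneg _)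
        _ = (∑ j : Fin n, ‖M i j‖) * ‖v i‖ :=
            (Finset.sum_mul _ _ _).symm
        _ = 1 * ‖v i‖ := by rw [hrowM]
    have hμ1 : ‖μ‖ ≤ 1 := le_of_mul_le_mul_right key hvi
    have hre : |μ.re| ≤ 1 := le_trans (Complex.abs_re_le_norm μ) hμ1
    exact abs_le.mp hre
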